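/- (Proposition 3) Let d ≥ 1 and let {S_p}_{p=0}^{d²-1} and {R_q}_{q=0}^{d²-1} be two families of unitary operators on ℂ^d, each family pairwise Hilbert–Schmidt orthogonal with Tr(S_p* S_{p'}) = d·δ_{pp'} and Tr(R_q* R_{q'}) = d·δ_{qq'} (so each is an orthogonal unitary basis of the full d²-dimensional space of operators on ℂ^d). Suppose that for every pair (p, q) there exists an orthonormal basis {ν_i}_{i=0}^{d²-1} of ℂ^d ⊗ ℂ^d (depending on p, q) with |⟨ν_i, (S_p R_q* ⊗ I) ν_j⟩| = 1/d for all indices i, j. Then the two bases are mutually unbiased: |Tr(S_p R_q*)| = 1 for all p, q. -/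

import Mathlib

open scoped ComplexInnerProductSpace Matrix Kronecker

noncomputable section


lemma trace_via_onb' {n : Type*} [Fintype n] [DecidableEq n]
    (ν : OrthonormalBasis n ℂ (EuclideanSpace ℂ n)) (M : Matrix n n ℂ) :
    ∑ i, ⟪ν i, Matrix.toEuclideanLin M (ν i)⟫ = M.trace := by
  have h1 : LinearMap.trace ℂ _ (Matrix.toEuclideanLin M) = M.trace := by
    rw [Matrix.toEuclideanLin_eq_toLin,
      LinearMap.trace_eq_matrix_trace ℂ ((PiLp.basisFun 2 ℂ n)),
      LinearMap.toMatrix_toLin]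
  have h2 : LinearMap.trace ℂ _ (Matrix.toEuclideanLin M)
      = ∑ i, ⟪ν i, Matrix.toEuclideanLin M (ν i)⟫ := by
    rw [LinearMap.trace_eq_matrix_trace ℂ ν.toBasis, Matrix.trace]
    refine Finset.sum_congr rfl fun i _ => ?_
    rw [Matrix.diag_apply, LinearMap.toMatrix_apply, OrthonormalBasis.coe_toBasis,
      OrthonormalBasis.coe_toBasis_repr_apply, OrthonormalBasis.repr_apply_apply]
  rw [← h2, h1]

def emb' {d : ℕ} (A : Matrix (Fin d) (Fin d) ℂ) : EuclideanSpace ℂ (Fin d × Fin d) :=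
  WithLp.toLp 2 (fun ij : Fin d × Fin d => A ij.1 ij.2)

lemma inner_emb' {d : ℕ} (A B : Matrix (Fin d) (Fin d) ℂ) :
    ⟪emb' A, emb' B⟫ = (Aᴴ * B).trace := by
  simp only [PiLp.inner_apply, emb', PiLp.toLp_apply, RCLike.inner_apply, Matrix.trace,
    Matrix.diag_apply, Matrix.mul_apply, Matrix.conjTranspose_apply]
  rw [Fintype.sum_prod_type]
  simp only [mul_comm (B _ _)]
  exact Finset.sum_comm


/-- Action of a matrix indexed by `Fin d × Fin d` on `ℂ^d ⊗ ℂ^d`. -/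
def act2 {d : ℕ} (M : Matrix (Fin d × Fin d) (Fin d × Fin d) ℂ)
    (ψ : EuclideanSpace ℂ (Fin d × Fin d)) : EuclideanSpace ℂ (Fin d × Fin d) :=
  Matrix.toEuclideanLin M ψ

/-- Proposition 3: two orthogonal unitary bases of the full `d²`-dimensional
space of operators on `ℂ^d`, all of whose pairs saturate the maximal entropic
bound for some tester with maximally entangled input, are mutually unbiased. -/
theorem stmt_13 {d : ℕ} (hd : 1 ≤ d)
    (S R : Fin (d * d) → Matrix (Fin d) (Fin d) ℂ)
    (hSu : ∀ p, S p ∈ Matrix.unitaryGroup (Fin d) ℂ)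
    (hRu : ∀ q, R q ∈ Matrix.unitaryGroup (Fin d) ℂ)
    (hSorth : ∀ p p', Matrix.trace ((S p)ᴴ * S p') = if p = p' then (d : ℂ) else 0)
    (hRorth : ∀ q q', Matrix.trace ((R q)ᴴ * R q') = if q = q' then (d : ℂ) else 0)
    (hsat : ∀ p q : Fin (d * d),
      ∃ ν : OrthonormalBasis (Fin d × Fin d) ℂ (EuclideanSpace ℂ (Fin d × Fin d)),
        ∀ i j : Fin d × Fin d,
          ‖⟪ν i, act2 ((S p * (R q)ᴴ) ⊗ₖ (1 : Matrix (Fin d) (Fin d) ℂ)) (ν j)⟫‖ = 1 / d) :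
    ∀ p q : Fin (d * d), ‖Matrix.trace (S p * (R q)ᴴ)‖ = 1 := by
  simp only [act2] at hsat
  have hd0 : (0:ℝ) < d := by exact_mod_cast hd
  have hdC : (d:ℂ) ≠ 0 := Nat.cast_ne_zero.2 (by omega)
  -- Step 1: upper bound for every pair
  have hbound : ∀ p q : Fin (d*d), ‖Matrix.trace (S p * (R q)ᴴ)‖ ≤ 1 := by
    intro p q
    obtain ⟨ν, hν⟩ := hsat p q
    have htr := trace_via_onb' ν ((S p * (R q)ᴴ) ⊗ₖ (1 : Matrix (Fin d) (Fin d) ℂ))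
    rw [Matrix.trace_kronecker, Matrix.trace_one, Fintype.card_fin] at htr
    have hle : ‖(S p * (R q)ᴴ).trace * (d:ℂ)‖ ≤ (d:ℝ) := by
      rw [← htr]
      calc ‖∑ i, ⟪ν i, Matrix.toEuclideanLin ((S p * (R q)ᴴ) ⊗ₖ (1 : Matrix (Fin d) (Fin d) ℂ)) (ν i)⟫‖
          ≤ ∑ i : Fin d × Fin d, ‖⟪ν i, Matrix.toEuclideanLin ((S p * (R q)ᴴ) ⊗ₖ (1 : Matrix (Fin d) (Fin d) ℂ)) (ν i)⟫‖ :=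
            norm_sum_le _ _
        _ = ∑ _i : Fin d × Fin d, 1 / (d:ℝ) := Finset.sum_congr rfl fun i _ => hν i i
        _ = (d:ℝ) := by
            rw [Finset.sum_const, Finset.card_univ, Fintype.card_prod, Fintype.card_fin]
            rw [nsmul_eq_mul, Nat.cast_mul]
            field_simp
    rw [norm_mul, Complex.norm_natCast] at hle
    calc ‖(S p * (R q)ᴴ).trace‖ = ‖(S p * (R q)ᴴ).trace‖ * d / d := by field_simp
      _ ≤ d / d := by gcongr
      _ = 1 := by field_simp
  -- relation between the two traces
  have hconj : ∀ p q : Fin (d*d),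
      Matrix.trace ((S p)ᴴ * R q) = (starRingEnd ℂ) (Matrix.trace (S p * (R q)ᴴ)) := by
    intro p q
    calc ((S p)ᴴ * R q).trace = (((R q)ᴴ * S p)ᴴ).trace := by
          rw [Matrix.conjTranspose_mul, Matrix.conjTranspose_conjTranspose]
      _ = star (((R q)ᴴ * S p).trace) := Matrix.trace_conjTranspose _
      _ = (starRingEnd ℂ) ((S p * (R q)ᴴ).trace) := by rw [Matrix.trace_mul_comm]; rfl
  intro p q
  set t : Fin (d*d) → ℝ := fun p => ‖Matrix.trace (S p * (R q)ᴴ)‖ with ht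
  have hnorm : ∀ p', ‖Matrix.trace ((S p')ᴴ * R q)‖ = t p' := by
    intro p'; rw [hconj]; exact norm_star _
  -- the rescaled S family as an orthonormal basis
  set a : ℂ := ((Real.sqrt d : ℝ) : ℂ)⁻¹ with ha
  have hsq : ((Real.sqrt d : ℝ):ℂ) * ((Real.sqrt d : ℝ):ℂ) = (d:ℂ) := by
    rw [← Complex.ofReal_mul, Real.mul_self_sqrt hd0.le]
    norm_cast
  have haconj : (starRingEnd ℂ) a = a := by
    rw [ha, map_inv₀, Complex.conj_ofReal]
  have ha2 : a * a * (d:ℂ) = 1 := by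
    rw [ha, ← mul_inv, hsq]
    exact inv_mul_cancel₀ hdC
  have hna : ‖a‖ = (Real.sqrt d)⁻¹ := by
    rw [ha, norm_inv, Complex.norm_real, Real.norm_eq_abs,
      abs_of_nonneg (Real.sqrt_nonneg _)]
  set e : Fin (d*d) → EuclideanSpace ℂ (Fin d × Fin d) := fun p => a • emb' (S p) with he
  have horth : Orthonormal ℂ e := by
    rw [orthonormal_iff_ite]
    intro i j
    rw [he]
    simp only [inner_smul_left, inner_smul_right, inner_emb', hSorth, haconj]
    split_ifs with h
    · rw [← mul_assoc]; exact ha2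
    · ring
  haveI : Nonempty (Fin (d*d)) := ⟨⟨0, by positivity⟩⟩
  have hcard : Fintype.card (Fin (d*d)) = Module.finrank ℂ (EuclideanSpace ℂ (Fin d × Fin d)) := by
    simp [finrank_euclideanSpace]
  let b := basisOfOrthonormalOfCardEqFinrank horth hcard
  have hb : ⇑b = e := coe_basisOfOrthonormalOfCardEqFinrank horth hcard
  let onb : OrthonormalBasis (Fin (d*d)) ℂ (EuclideanSpace ℂ (Fin d × Fin d)) :=
    b.toOrthonormalBasis (by rwa [hb])
  have honb : ∀ p', onb p' = e p' := fun p' => by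
    rw [show onb p' = b p' from congrFun (b.coe_toOrthonormalBasis _) p', hb]
  -- Parseval for w = emb' (R q)
  set w : EuclideanSpace ℂ (Fin d × Fin d) := emb' (R q) with hw
  have hpar := onb.sum_inner_mul_inner w w
  have hww : ⟪w, w⟫ = (d:ℂ) := by rw [hw, inner_emb', hRorth, if_pos rfl]
  have hterm : ∀ p', ⟪w, onb p'⟫ * ⟪onb p', w⟫ = ((((d:ℝ))⁻¹ * t p' ^ 2 : ℝ) : ℂ) := by
    intro p'
    rw [← inner_conj_symm w (onb p'), ← Complex.normSq_eq_conj_mul_self]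
    have hz : ⟪onb p', w⟫ = a * ((S p')ᴴ * R q).trace := by
      rw [honb, he]
      simp only [inner_smul_left, haconj]
      rw [hw, inner_emb']
    rw [hz]
    rw [Complex.normSq_eq_norm_sq, norm_mul, hna, hnorm]
    push_cast
    rw [mul_pow, inv_pow, sq ((Real.sqrt d : ℝ):ℂ), hsq]
  rw [hww, Finset.sum_congr rfl (fun p' _ => hterm p')] at hpar
  rw [← Complex.ofReal_sum] at hpar
  have hreal : ∑ p', (d:ℝ)⁻¹ * t p' ^ 2 = (d:ℝ) := by exact_mod_cast hpar
  have hsum : ∑ p', t p' ^ 2 = (d:ℝ) * d := by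
    rw [← Finset.mul_sum] at hreal
    have := hreal
    field_simp at this
    linarith [this]
  -- Step 3: conclude
  have hzero : ∑ p' : Fin (d*d), (1 - t p' ^ 2) = 0 := by
    rw [Finset.sum_sub_distrib, hsum, Finset.sum_const, Finset.card_univ, Fintype.card_fin]
    push_cast
    ring
  have hnonneg : ∀ p' ∈ Finset.univ, (0:ℝ) ≤ 1 - t p' ^ 2 := by
    intro p' _
    have h1 := hbound p' q
    have h0 : 0 ≤ t p' := norm_nonneg _
    nlinarith
  have heach := (Finset.sum_eq_zero_iff_of_nonneg hnonneg).1 hzero p (Finset.mem_univ _)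
  have h0 : 0 ≤ t p := norm_nonneg _
  have hfac : (t p - 1) * (t p + 1) = 0 := by nlinarith
  rcases mul_eq_zero.1 hfac with h | h
  · show t p = 1; linarith
  · linarith

end
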